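/- arXiv:2112.14456 — 2 statements merged into one kernel-verified Lean document; each statement's English description precedes it below -/
import Mathlib

section
/- One-step linear contraction of the non-adaptive sketched Bregman projection method: let f : ℝ^n → ℝ be μ-strongly convex, x ∈ ℝ^n, x_* ∈ ∂f(x), A x̄ = b, and p ∈ Δ_q^†. Assume (i) a spectral bound: σ > 0 with Σ_i p_i·vᵀ Z_i v ≥ σ‖v‖² for all v ∉ Null(A); (ii) an error bound: γ > 0 with γ·D_f^{x_*}(x, x̄) ≤ ‖Ax − b‖²; (iii) for each i, a point x̂_i with S_iᵀ A x̂_i = S_iᵀ b and a subgradient x̂_{i,*} ∈ ∂f(x̂_i) satisfying D_f^{x̂_{i,*}}(x̂_i, y) ≤ D_f^{x_*}(x, y) − D_f^{x_*}(x, x̂_i) for all y with S_iᵀ A y = S_iᵀ b. Then Σ_{i=1}^q p_i·D_f^{x̂_{i,*}}(x̂_i, x̄) ≤ (1 − μγσ/(2‖A‖²))·D_f^{x_*}(x, x̄), where ‖A‖ is the spectral norm of A (assume A ≠ 0). -/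
open Matrix

/-- The spectral norm (ℓ²→ℓ² operator norm) of a real matrix. -/
noncomputable def specNorm {m n : ℕ} (A : Matrix (Fin m) (Fin n) ℝ) : ℝ :=
  ‖LinearMap.toContinuousLinearMap (Matrix.toEuclideanLin A)‖

/-- `x_*` is a subgradient of `f` at `x`. -/
def IsSubgrad {n : ℕ} (f : (Fin n → ℝ) → ℝ) (x xs : Fin n → ℝ) : Prop :=
  ∀ u : Fin n → ℝ, f u ≥ f x + xs ⬝ᵥ (u - x)

/-- `f` is μ-strongly convex (w.r.t. the Euclidean norm, ‖v‖² = v ⬝ᵥ v). -/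
def StronglyConvexWith {n : ℕ} (μ : ℝ) (f : (Fin n → ℝ) → ℝ) : Prop :=
  ∀ x y xs : Fin n → ℝ, IsSubgrad f x xs →
    f y ≥ f x + xs ⬝ᵥ (y - x) + μ / 2 * ((y - x) ⬝ᵥ (y - x))

/-- Bregman distance D_f^{x_*}(x, y) := f(y) − f(x) − ⟨x_*, y − x⟩. -/
noncomputable def breg {n : ℕ} (f : (Fin n → ℝ) → ℝ) (xs x y : Fin n → ℝ) : ℝ :=
  f y - f x - xs ⬝ᵥ (y - x)

lemma dot_self_nonneg' {n : ℕ} (v : Fin n → ℝ) : 0 ≤ v ⬝ᵥ v :=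
  Finset.sum_nonneg fun i _ => mul_self_nonneg _

lemma dot_transpose {k n : ℕ} (B : Matrix (Fin k) (Fin n) ℝ) (u : Fin n → ℝ)
    (z : Fin k → ℝ) : u ⬝ᵥ Bᵀ.mulVec z = B.mulVec u ⬝ᵥ z := by
  rw [Matrix.dotProduct_mulVec, Matrix.vecMul_transpose]

lemma quad_eq {k n : ℕ} (B : Matrix (Fin k) (Fin n) ℝ) (Wm : Matrix (Fin k) (Fin k) ℝ)
    (u : Fin n → ℝ) :
    u ⬝ᵥ (Bᵀ * Wm * B).mulVec u = B.mulVec u ⬝ᵥ Wm.mulVec (B.mulVec u) := by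
  rw [Matrix.mul_assoc, ← Matrix.mulVec_mulVec, dot_transpose, Matrix.mulVec_mulVec]

lemma proj_le {n : ℕ} (Z : Matrix (Fin n) (Fin n) ℝ) (hsym : Zᵀ = Z)
    (hidem : Z * Z = Z) (v : Fin n → ℝ) : v ⬝ᵥ Z.mulVec v ≤ v ⬝ᵥ v := by
  have h0 := dot_self_nonneg' (v - Z.mulVec v)
  have hzz : Z.mulVec v ⬝ᵥ Z.mulVec v = v ⬝ᵥ Z.mulVec v := by
    rw [← dot_transpose Z v (Z.mulVec v)]
    rw [hsym, Matrix.mulVec_mulVec, hidem]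
  have hcomm : Z.mulVec v ⬝ᵥ v = v ⬝ᵥ Z.mulVec v := dotProduct_comm _ _
  rw [sub_dotProduct, dotProduct_sub, dotProduct_sub] at h0
  linarith

lemma specNorm_pos {m n : ℕ} (A : Matrix (Fin m) (Fin n) ℝ) (hA : A ≠ 0) :
    0 < specNorm A := by
  rcases (norm_nonneg (LinearMap.toContinuousLinearMap (Matrix.toEuclideanLin A))).lt_or_eq
    with h | h
  · exact h
  · exfalso
    apply hA
    have h1 : LinearMap.toContinuousLinearMap (Matrix.toEuclideanLin A) = 0 :=
      norm_eq_zero.mp h.symm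
    have h2 : Matrix.toEuclideanLin A = 0 := by
      have := congrArg (fun (L : EuclideanSpace ℝ (Fin n) →L[ℝ] EuclideanSpace ℝ (Fin m)) =>
        (L : EuclideanSpace ℝ (Fin n) →ₗ[ℝ] EuclideanSpace ℝ (Fin m))) h1
      simpa using this
    exact (LinearEquiv.map_eq_zero_iff _).mp h2

lemma mulVec_dot_le {m n : ℕ} (A : Matrix (Fin m) (Fin n) ℝ) (v : Fin n → ℝ) :
    A.mulVec v ⬝ᵥ A.mulVec v ≤ specNorm A ^ 2 * (v ⬝ᵥ v) := by
  set L := LinearMap.toContinuousLinearMap (Matrix.toEuclideanLin A) with hL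
  have key : ∀ (k : ℕ) (w : Fin k → ℝ),
      w ⬝ᵥ w = ‖(WithLp.equiv 2 (Fin k → ℝ)).symm w‖ ^ 2 := by
    intro k w
    rw [← real_inner_self_eq_norm_sq]
    rw [PiLp.inner_apply]
    simp [dotProduct, sq]
  have hLv : L ((WithLp.equiv 2 (Fin n → ℝ)).symm v)
      = (WithLp.equiv 2 (Fin m → ℝ)).symm (A.mulVec v) := by
    simp [hL, LinearMap.coe_toContinuousLinearMap']
  have hb := L.le_opNorm ((WithLp.equiv 2 (Fin n → ℝ)).symm v)
  rw [hLv] at hb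
  have hb2 : ‖(WithLp.equiv 2 (Fin m → ℝ)).symm (A.mulVec v)‖ ^ 2
      ≤ (‖L‖ * ‖(WithLp.equiv 2 (Fin n → ℝ)).symm v‖) ^ 2 := by
    apply pow_le_pow_left₀ (norm_nonneg _) hb
  rw [key m (A.mulVec v), key n v, specNorm, ← hL]
  calc ‖(WithLp.equiv 2 (Fin m → ℝ)).symm (A.mulVec v)‖ ^ 2
      ≤ (‖L‖ * ‖(WithLp.equiv 2 (Fin n → ℝ)).symm v‖) ^ 2 := hb2
    _ = ‖L‖ ^ 2 * ‖(WithLp.equiv 2 (Fin n → ℝ)).symm v‖ ^ 2 := by ring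

/-- one-step linear contraction of the non-adaptive sketched Bregman
projection method: Σ p_i D_f^{x̂_{i,*}}(x̂_i, x̄) ≤ (1 − μγσ/(2‖A‖²))·D_f^{x_*}(x, x̄). -/
theorem stmt6 {m n τ q : ℕ} (A : Matrix (Fin m) (Fin n) ℝ) (hA : A ≠ 0)
    (b : Fin m → ℝ) (xbar : Fin n → ℝ) (hxbar : A.mulVec xbar = b)
    (S : Fin q → Matrix (Fin m) (Fin τ) ℝ) (W : Fin q → Matrix (Fin τ) (Fin τ) ℝ)
    (hWsym : ∀ i, (W i)ᵀ = W i)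
    (hMWM : ∀ i, ((S i)ᵀ * A * Aᵀ * S i) * W i * ((S i)ᵀ * A * Aᵀ * S i)
      = (S i)ᵀ * A * Aᵀ * S i)
    (hWMW : ∀ i, W i * ((S i)ᵀ * A * Aᵀ * S i) * W i = W i)
    (hMW : ∀ i, (((S i)ᵀ * A * Aᵀ * S i) * W i)ᵀ = ((S i)ᵀ * A * Aᵀ * S i) * W i)
    (hWM : ∀ i, (W i * ((S i)ᵀ * A * Aᵀ * S i))ᵀ = W i * ((S i)ᵀ * A * Aᵀ * S i))
    (f : (Fin n → ℝ) → ℝ) (μ : ℝ) (hμ : 0 < μ) (hf : StronglyConvexWith μ f)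
    (x xs : Fin n → ℝ) (hxs : IsSubgrad f x xs)
    (p : Fin q → ℝ) (hp : ∀ i, 0 < p i) (hp1 : ∑ i, p i = 1)
    (σ : ℝ) (hσ : 0 < σ)
    (hspec : ∀ v : Fin n → ℝ, A.mulVec v ≠ 0 →
      σ * (v ⬝ᵥ v) ≤ ∑ i, p i * (v ⬝ᵥ (Aᵀ * (S i * W i * (S i)ᵀ) * A).mulVec v))
    (γ : ℝ) (hγ : 0 < γ)
    (herr : γ * breg f xs x xbar ≤ (A.mulVec x - b) ⬝ᵥ (A.mulVec x - b))
    (xhat xhs : Fin q → (Fin n → ℝ))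
    (hxhatL : ∀ i, ((S i)ᵀ * A).mulVec (xhat i) = (S i)ᵀ.mulVec b)
    (hxhs : ∀ i, IsSubgrad f (xhat i) (xhs i))
    (hadm : ∀ i, ∀ y : Fin n → ℝ, ((S i)ᵀ * A).mulVec y = (S i)ᵀ.mulVec b →
      breg f (xhs i) (xhat i) y ≤ breg f xs x y - breg f xs x (xhat i)) :
    ∑ i, p i * breg f (xhs i) (xhat i) xbar ≤
      (1 - μ * γ * σ / (2 * (specNorm A) ^ 2)) * breg f xs x xbar := by
  classical
  set D := breg f xs x xbar with hD
  set N := specNorm A ^ 2 with hN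
  have hNpos : 0 < N := by
    have := specNorm_pos A hA; positivity
  set w := x - xbar with hw
  have hAw : A.mulVec w = A.mulVec x - b := by
    rw [hw, Matrix.mulVec_sub, hxbar]
  -- Bregman lower bound from strong convexity
  have hbreg_ge : ∀ y : Fin n → ℝ, μ / 2 * ((y - x) ⬝ᵥ (y - x)) ≤ breg f xs x y := by
    intro y
    have := hf x y xs hxs
    simp only [breg]
    linarith
  -- xbar satisfies each sketched system
  have hxbarL : ∀ i, ((S i)ᵀ * A).mulVec xbar = (S i)ᵀ.mulVec b := by
    intro i
    rw [← Matrix.mulVec_mulVec, hxbar]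
  have hstep : ∀ i, breg f (xhs i) (xhat i) xbar ≤ D - breg f xs x (xhat i) :=
    fun i => hadm i xbar (hxbarL i)
  -- projection facts
  have key : ∀ i, w ⬝ᵥ (Aᵀ * (S i * W i * (S i)ᵀ) * A).mulVec w
      ≤ (xhat i - x) ⬝ᵥ (xhat i - x) := by
    intro i
    set B : Matrix (Fin τ) (Fin n) ℝ := (S i)ᵀ * A with hB
    have hrw : Aᵀ * (S i * W i * (S i)ᵀ) * A = Bᵀ * W i * B := by
      simp only [hB, Matrix.transpose_mul, Matrix.transpose_transpose, Matrix.mul_assoc]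
    have hBBt : B * Bᵀ = (S i)ᵀ * A * Aᵀ * S i := by
      simp only [hB, Matrix.transpose_mul, Matrix.transpose_transpose, Matrix.mul_assoc]
    set Z : Matrix (Fin n) (Fin n) ℝ := Bᵀ * W i * B with hZ
    have hZsym : Zᵀ = Z := by
      simp only [hZ, Matrix.transpose_mul, Matrix.transpose_transpose, hWsym i,
        Matrix.mul_assoc]
    have hZidem : Z * Z = Z := by
      have h1 : Z * Z = Bᵀ * (W i * (B * Bᵀ) * W i) * B := by
        simp only [hZ, Matrix.mul_assoc]
      rw [h1, hBBt, hWMW i]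
    -- B w = -(B (xhat i - x))
    have hBu : B.mulVec (xhat i - x) = -(B.mulVec w) := by
      rw [hw, Matrix.mulVec_sub, Matrix.mulVec_sub, hxhatL i, hxbarL i]
      abel
    have hquad : w ⬝ᵥ Z.mulVec w = (xhat i - x) ⬝ᵥ Z.mulVec (xhat i - x) := by
      rw [hZ, quad_eq, quad_eq, hBu, Matrix.mulVec_neg, neg_dotProduct,
        dotProduct_neg, neg_neg]
    rw [hrw, hquad]
    exact proj_le Z hZsym hZidem (xhat i - x)
  -- sum bound on Bregman distances to iterates
  have hsum_breg : μ / 2 * ∑ i, p i * (w ⬝ᵥ (Aᵀ * (S i * W i * (S i)ᵀ) * A).mulVec w)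
      ≤ ∑ i, p i * breg f xs x (xhat i) := by
    rw [Finset.mul_sum]
    apply Finset.sum_le_sum
    intro i _
    have h1 : μ / 2 * (w ⬝ᵥ (Aᵀ * (S i * W i * (S i)ᵀ) * A).mulVec w)
        ≤ breg f xs x (xhat i) := by
      have := hbreg_ge (xhat i)
      have hk := key i
      nlinarith
    calc μ / 2 * (p i * (w ⬝ᵥ (Aᵀ * (S i * W i * (S i)ᵀ) * A).mulVec w))
        = p i * (μ / 2 * (w ⬝ᵥ (Aᵀ * (S i * W i * (S i)ᵀ) * A).mulVec w)) := by ring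
      _ ≤ p i * breg f xs x (xhat i) := mul_le_mul_of_nonneg_left h1 (hp i).le
  have hsum_step : ∑ i, p i * breg f (xhs i) (xhat i) xbar
      ≤ D - ∑ i, p i * breg f xs x (xhat i) := by
    have h1 : ∑ i, p i * breg f (xhs i) (xhat i) xbar
        ≤ ∑ i, p i * (D - breg f xs x (xhat i)) :=
      Finset.sum_le_sum fun i _ => mul_le_mul_of_nonneg_left (hstep i) (hp i).le
    have h2 : ∑ i, p i * (D - breg f xs x (xhat i))
        = D - ∑ i, p i * breg f xs x (xhat i) := by
      simp only [mul_sub]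
      rw [Finset.sum_sub_distrib, ← Finset.sum_mul, hp1, one_mul]
    linarith
  by_cases hAw0 : A.mulVec w = 0
  · -- degenerate case: residual is zero, D = 0
    have hr0 : A.mulVec x - b = 0 := by rw [← hAw]; exact hAw0
    have hD0 : D = 0 := by
      have h1 : γ * D ≤ 0 := by
        have := herr; rw [hr0] at this; simpa [hD] using this
      have h2 : 0 ≤ D := by
        have := hbreg_ge xbar
        have := dot_self_nonneg' (xbar - x)
        nlinarith
      nlinarith
    have hLHS : ∑ i, p i * breg f (xhs i) (xhat i) xbar ≤ 0 := by
      have : ∑ i, p i * breg f xs x (xhat i) ≥ 0 := by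
        apply Finset.sum_nonneg
        intro i _
        apply mul_nonneg (hp i).le
        have := hbreg_ge (xhat i)
        have := dot_self_nonneg' (xhat i - x)
        nlinarith
      linarith [hsum_step, hD0]
    rw [hD0, mul_zero]
    exact hLHS
  · -- main case
    have hspec' := hspec w hAw0
    have hnorm : γ * D ≤ N * (w ⬝ᵥ w) := by
      have h1 : A.mulVec w ⬝ᵥ A.mulVec w ≤ N * (w ⬝ᵥ w) := mulVec_dot_le A w
      rw [hAw] at h1
      linarith [herr]
    have hkey2 : μ * γ * σ * D / (2 * N) ≤ ∑ i, p i * breg f xs x (xhat i) := by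
      rw [div_le_iff₀ (by positivity)]
      have h3 : μ / 2 * (σ * (w ⬝ᵥ w))
          ≤ μ / 2 * ∑ i, p i * (w ⬝ᵥ (Aᵀ * (S i * W i * (S i)ᵀ) * A).mulVec w) := by
        apply mul_le_mul_of_nonneg_left hspec' (by positivity)
      have h4 := hsum_breg
      nlinarith [mul_le_mul_of_nonneg_left hnorm (by positivity : (0:ℝ) ≤ μ * σ)]
    have hfinal : (1 - μ * γ * σ / (2 * N)) * D = D - μ * γ * σ * D / (2 * N) := by
      ring
    rw [hfinal]
    linarith [hsum_step, hkey2]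
end

section
/- One-step linear contraction of the max-distance sketched Bregman projection method: let f : ℝ^n → ℝ be μ-strongly convex, x ∈ ℝ^n, x_* ∈ ∂f(x), A x̄ = b. Assume (i) a max-spectral bound: σ_∞ > 0 with max_{i=1,…,q} vᵀ Z_i v ≥ σ_∞‖v‖² for all v ∉ Null(A); (ii) an error bound: γ > 0 with γ·D_f^{x_*}(x, x̄) ≤ ‖Ax − b‖²; (iii) i* is an index maximizing g_i(x) over i = 1,…,q, and x̂ is a point with S_{i*}ᵀ A x̂ = S_{i*}ᵀ b admitting x̂_* ∈ ∂f(x̂) with D_f^{x̂_*}(x̂, y) ≤ D_f^{x_*}(x, y) − D_f^{x_*}(x, x̂) for all y with S_{i*}ᵀ A y = S_{i*}ᵀ b. Then D_f^{x̂_*}(x̂, x̄) ≤ (1 − μγσ_∞/(2‖A‖²))·D_f^{x_*}(x, x̄), where ‖A‖ is the spectral norm of A (assume A ≠ 0). -/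
open Matrix

lemma dotSelf_nonneg {k : ℕ} (v : Fin k → ℝ) : 0 ≤ v ⬝ᵥ v :=
  Finset.sum_nonneg fun _ _ => mul_self_nonneg _

lemma dot_mulVec_t {a b : ℕ} (M : Matrix (Fin a) (Fin b) ℝ) (v : Fin a → ℝ) (w : Fin b → ℝ) :
    v ⬝ᵥ M.mulVec w = Mᵀ.mulVec v ⬝ᵥ w := by
  rw [Matrix.dotProduct_mulVec, Matrix.mulVec_transpose]

lemma euclid_norm_sq {k : ℕ} (u : Fin k → ℝ) :
    ‖(WithLp.equiv 2 (Fin k → ℝ)).symm u‖ ^ 2 = u ⬝ᵥ u := by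
  rw [← real_inner_self_eq_norm_sq]
  simp only [PiLp.inner_apply, dotProduct, RCLike.inner_apply, mul_comm, WithLp.equiv_symm_apply, conj_trivial]

lemma specNorm_bound {m n : ℕ} (A : Matrix (Fin m) (Fin n) ℝ) (v : Fin n → ℝ) :
    (A.mulVec v) ⬝ᵥ (A.mulVec v) ≤ specNorm A ^ 2 * (v ⬝ᵥ v) := by
  have h := (LinearMap.toContinuousLinearMap (Matrix.toEuclideanLin A)).le_opNorm
      ((WithLp.equiv 2 (Fin n → ℝ)).symm v)
  have h2 : ‖LinearMap.toContinuousLinearMap (Matrix.toEuclideanLin A)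
      ((WithLp.equiv 2 (Fin n → ℝ)).symm v)‖ ^ 2
      = (A.mulVec v) ⬝ᵥ (A.mulVec v) := by
    rw [LinearMap.coe_toContinuousLinearMap', Matrix.toEuclideanLin_apply_piLp_toLp]; exact euclid_norm_sq _
  have h3 := euclid_norm_sq v
  have h4 := pow_le_pow_left₀ (norm_nonneg _) h 2
  rw [mul_pow, h2, h3] at h4
  exact h4

lemma proj_bound {k : ℕ} (Z : Matrix (Fin k) (Fin k) ℝ) (hs : Zᵀ = Z) (hi : Z * Z = Z)
    (w : Fin k → ℝ) : w ⬝ᵥ Z.mulVec w ≤ w ⬝ᵥ w := by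
  have h0 : 0 ≤ (w - Z.mulVec w) ⬝ᵥ (w - Z.mulVec w) := dotSelf_nonneg _
  have h1 : (Z.mulVec w) ⬝ᵥ (Z.mulVec w) = w ⬝ᵥ Z.mulVec w := by
    rw [dot_mulVec_t, hs, Matrix.mulVec_mulVec, hi, dotProduct_comm]
  have h2 : (Z.mulVec w) ⬝ᵥ w = w ⬝ᵥ Z.mulVec w := dotProduct_comm _ _
  have h3 : (w - Z.mulVec w) ⬝ᵥ (w - Z.mulVec w)
      = w ⬝ᵥ w - w ⬝ᵥ Z.mulVec w - ((Z.mulVec w) ⬝ᵥ w - (Z.mulVec w) ⬝ᵥ (Z.mulVec w)) := by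
    rw [sub_dotProduct, dotProduct_sub, dotProduct_sub]
  linarith [h3 ▸ h0]

/-- Maximum of a real-valued function over a finite nonempty index type. -/
noncomputable def fmax {ι : Type*} [Fintype ι] [Nonempty ι] (v : ι → ℝ) : ℝ :=
  Finset.univ.sup' Finset.univ_nonempty v

/-- one-step linear contraction of the max-distance sketched Bregman
projection method: D_f^{x̂_*}(x̂, x̄) ≤ (1 − μγσ_∞/(2‖A‖²))·D_f^{x_*}(x, x̄). -/
theorem stmt7 {m n τ q : ℕ} [NeZero q] (A : Matrix (Fin m) (Fin n) ℝ) (hA : A ≠ 0)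
    (b : Fin m → ℝ) (xbar : Fin n → ℝ) (hxbar : A.mulVec xbar = b)
    (S : Fin q → Matrix (Fin m) (Fin τ) ℝ) (W : Fin q → Matrix (Fin τ) (Fin τ) ℝ)
    (hWsym : ∀ i, (W i)ᵀ = W i)
    (hMWM : ∀ i, ((S i)ᵀ * A * Aᵀ * S i) * W i * ((S i)ᵀ * A * Aᵀ * S i)
      = (S i)ᵀ * A * Aᵀ * S i)
    (hWMW : ∀ i, W i * ((S i)ᵀ * A * Aᵀ * S i) * W i = W i)
    (hMW : ∀ i, (((S i)ᵀ * A * Aᵀ * S i) * W i)ᵀ = ((S i)ᵀ * A * Aᵀ * S i) * W i)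
    (hWM : ∀ i, (W i * ((S i)ᵀ * A * Aᵀ * S i))ᵀ = W i * ((S i)ᵀ * A * Aᵀ * S i))
    (f : (Fin n → ℝ) → ℝ) (μ : ℝ) (hμ : 0 < μ) (hf : StronglyConvexWith μ f)
    (x xs : Fin n → ℝ) (hxs : IsSubgrad f x xs)
    (σinf : ℝ) (hσinf : 0 < σinf)
    (hspec : ∀ v : Fin n → ℝ, A.mulVec v ≠ 0 →
      σinf * (v ⬝ᵥ v) ≤ fmax (fun i => v ⬝ᵥ (Aᵀ * (S i * W i * (S i)ᵀ) * A).mulVec v))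
    (γ : ℝ) (hγ : 0 < γ)
    (herr : γ * breg f xs x xbar ≤ (A.mulVec x - b) ⬝ᵥ (A.mulVec x - b))
    (istar : Fin q)
    (hstar : ∀ i, (A.mulVec x - b) ⬝ᵥ (S i * W i * (S i)ᵀ).mulVec (A.mulVec x - b) ≤
      (A.mulVec x - b) ⬝ᵥ (S istar * W istar * (S istar)ᵀ).mulVec (A.mulVec x - b))
    (xhat xhs : Fin n → ℝ)
    (hxhatL : ((S istar)ᵀ * A).mulVec xhat = (S istar)ᵀ.mulVec b)
    (hxhs : IsSubgrad f xhat xhs)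
    (hadm : ∀ y : Fin n → ℝ, ((S istar)ᵀ * A).mulVec y = (S istar)ᵀ.mulVec b →
      breg f xhs xhat y ≤ breg f xs x y - breg f xs x xhat) :
    breg f xhs xhat xbar ≤
      (1 - μ * γ * σinf / (2 * (specNorm A) ^ 2)) * breg f xs x xbar := by
  classical
  set r : Fin m → ℝ := A.mulVec x - b with hr_def
  set H : Matrix (Fin m) (Fin m) ℝ := S istar * W istar * (S istar)ᵀ with hH_def
  set Z : Matrix (Fin n) (Fin n) ℝ := Aᵀ * H * A with hZ_def
  set N : ℝ := specNorm A ^ 2 with hN_def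
  have hNpos : 0 < N := by rw [hN_def]; exact pow_pos (specNorm_pos A hA) 2
  have hHsym : Hᵀ = H := by
    rw [hH_def]
    simp [Matrix.transpose_mul, Matrix.transpose_transpose, hWsym istar, Matrix.mul_assoc]
  have hHAAH : H * (A * Aᵀ) * H = H := by
    rw [hH_def]
    calc S istar * W istar * (S istar)ᵀ * (A * Aᵀ) * (S istar * W istar * (S istar)ᵀ)
        = S istar * (W istar * ((S istar)ᵀ * A * Aᵀ * S istar) * W istar) * (S istar)ᵀ := by
          simp only [Matrix.mul_assoc]
      _ = S istar * W istar * (S istar)ᵀ := by rw [hWMW]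
  have hZsym : Zᵀ = Z := by
    rw [hZ_def]
    simp [Matrix.transpose_mul, Matrix.transpose_transpose, hHsym, Matrix.mul_assoc]
  have hZZ : Z * Z = Z := by
    rw [hZ_def]
    calc Aᵀ * H * A * (Aᵀ * H * A) = Aᵀ * (H * (A * Aᵀ) * H) * A := by
          simp only [Matrix.mul_assoc]
      _ = Aᵀ * H * A := by rw [hHAAH]
  have hxbarC : ((S istar)ᵀ * A).mulVec xbar = (S istar)ᵀ.mulVec b := by
    rw [← Matrix.mulVec_mulVec, hxbar]
  have hadm' := hadm xbar hxbarC
  have hscx : μ / 2 * ((xhat - x) ⬝ᵥ (xhat - x)) ≤ breg f xs x xhat := by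
    have := hf x xhat xs hxs
    simp only [breg]
    linarith
  suffices hkey : μ * γ * σinf / (2 * N) * breg f xs x xbar ≤ breg f xs x xhat by
    have hexp : (1 - μ * γ * σinf / (2 * N)) * breg f xs x xbar
        = breg f xs x xbar - μ * γ * σinf / (2 * N) * breg f xs x xbar := by ring
    linarith
  have hdotnn : (0:ℝ) ≤ (xhat - x) ⬝ᵥ (xhat - x) := dotSelf_nonneg _
  by_cases hr0 : r = 0
  · have hD : γ * breg f xs x xbar ≤ 0 := by
      have h0 : r ⬝ᵥ r = 0 := by rw [hr0]; simp [dotProduct]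
      linarith [herr, h0.le, h0.ge]
    have hDle : breg f xs x xbar ≤ 0 := nonpos_of_mul_nonpos_right hD hγ
    have hcpos : 0 < μ * γ * σinf / (2 * N) :=
      div_pos (mul_pos (mul_pos hμ hγ) hσinf) (by linarith)
    have h1 : μ * γ * σinf / (2 * N) * breg f xs x xbar ≤ 0 :=
      mul_nonpos_of_nonneg_of_nonpos hcpos.le hDle
    have h2 : 0 ≤ μ / 2 * ((xhat - x) ⬝ᵥ (xhat - x)) :=
      mul_nonneg (by linarith) hdotnn
    linarith
  · -- main case: A (x - xbar) = r ≠ 0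
    have hAv : A.mulVec (x - xbar) = r := by
      rw [Matrix.mulVec_sub, hxbar, hr_def]
    have hspec' := hspec (x - xbar) (by rw [hAv]; exact hr0)
    have hfmax : fmax (fun i => (x - xbar) ⬝ᵥ (Aᵀ * (S i * W i * (S i)ᵀ) * A).mulVec (x - xbar))
        ≤ r ⬝ᵥ H.mulVec r := by
      unfold fmax
      apply Finset.sup'_le
      intro i _
      have hterm : (x - xbar) ⬝ᵥ (Aᵀ * (S i * W i * (S i)ᵀ) * A).mulVec (x - xbar)
          = r ⬝ᵥ (S i * W i * (S i)ᵀ).mulVec r := by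
        rw [← Matrix.mulVec_mulVec, ← Matrix.mulVec_mulVec, dot_mulVec_t,
          Matrix.transpose_transpose, hAv]
      rw [hterm]
      exact hstar i
    have hσ : σinf * ((x - xbar) ⬝ᵥ (x - xbar)) ≤ r ⬝ᵥ H.mulVec r := le_trans hspec' hfmax
    have hnormb : r ⬝ᵥ r ≤ N * ((x - xbar) ⬝ᵥ (x - xbar)) := by
      have h := specNorm_bound A (x - xbar)
      rw [hAv] at h
      exact h
    -- H r = (H A)(x - xhat)
    have hc0 : (S istar)ᵀ.mulVec (A.mulVec xhat - b) = 0 := by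
      rw [Matrix.mulVec_sub, Matrix.mulVec_mulVec, hxhatL, sub_self]
    have hH0 : H.mulVec (A.mulVec xhat - b) = 0 := by
      rw [hH_def, ← Matrix.mulVec_mulVec, hc0, Matrix.mulVec_zero]
    have hsplit : r = A.mulVec (x - xhat) + (A.mulVec xhat - b) := by
      rw [hr_def, Matrix.mulVec_sub]; abel
    have hrH : H.mulVec r = (H * A).mulVec (x - xhat) := by
      rw [hsplit, Matrix.mulVec_add, hH0, add_zero, Matrix.mulVec_mulVec]
    have hKK : (Aᵀ * H)ᵀ * (Aᵀ * H) = H := by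
      calc (Aᵀ * H)ᵀ * (Aᵀ * H) = H * A * (Aᵀ * H) := by
            rw [Matrix.transpose_mul, Matrix.transpose_transpose, hHsym]
        _ = H * (A * Aᵀ) * H := by simp only [Matrix.mul_assoc]
        _ = H := hHAAH
    have hu : (Aᵀ * H).mulVec r = Z.mulVec (x - xhat) := by
      rw [← Matrix.mulVec_mulVec, hrH, Matrix.mulVec_mulVec, hZ_def, Matrix.mul_assoc Aᵀ H A]
    have huu : ((Aᵀ * H).mulVec r) ⬝ᵥ ((Aᵀ * H).mulVec r) = r ⬝ᵥ H.mulVec r := by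
      rw [dot_mulVec_t, Matrix.mulVec_mulVec, hKK, dotProduct_comm]
    have hZw : (Z.mulVec (x - xhat)) ⬝ᵥ (Z.mulVec (x - xhat))
        = (x - xhat) ⬝ᵥ Z.mulVec (x - xhat) := by
      rw [dot_mulVec_t, hZsym, Matrix.mulVec_mulVec, hZZ, dotProduct_comm]
    have hg_proj : r ⬝ᵥ H.mulVec r ≤ (x - xhat) ⬝ᵥ (x - xhat) := by
      calc r ⬝ᵥ H.mulVec r = (x - xhat) ⬝ᵥ Z.mulVec (x - xhat) := by rw [← huu, hu, hZw]
        _ ≤ (x - xhat) ⬝ᵥ (x - xhat) := proj_bound Z hZsym hZZ _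
    have hdots : (x - xhat) ⬝ᵥ (x - xhat) = (xhat - x) ⬝ᵥ (xhat - x) := by
      rw [show x - xhat = -(xhat - x) from (neg_sub _ _).symm, neg_dotProduct,
        dotProduct_neg, neg_neg]
    rw [← hdots] at hscx
    rw [div_mul_eq_mul_div, div_le_iff₀ (by linarith : (0:ℝ) < 2 * N)]
    nlinarith [mul_le_mul_of_nonneg_left herr (mul_pos hμ hσinf).le,
      mul_le_mul_of_nonneg_left hnormb (mul_pos hμ hσinf).le,
      mul_le_mul_of_nonneg_left hσ (mul_pos hμ hNpos).le,
      mul_le_mul_of_nonneg_left hg_proj (mul_pos hμ hNpos).le,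
      mul_le_mul_of_nonneg_left hscx (by linarith : (0:ℝ) ≤ 2 * N)]
end
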